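/- (Theorem 3, InvLoss under gradient/embedding-level noise perturbation.) For every target x ∈ ℝ^m and noise ε ∈ ℝ^p injected into the shared gradients or embeddings, the Invertibility Loss under defense, inf over all linear maps A : ℝ^p → ℝ^m of ‖A (G x + ε) − x‖², is at most Σ_{i=k+1}^m ⟨v_i, x⟩² + Σ_{i=1}^k ⟨u_i, ε⟩² / σ_i². -/

import Mathlib

open scoped InnerProductSpace BigOperators

/-- Theorem 3 of the paper, InvLoss under gradient/embedding-level noise
perturbation: `inf_A ‖A (G x + ε) − x‖² ≤ ∑_(i=k+1)^m ⟨v_i, x⟩² + ∑_(i=1)^k ⟨u_i, ε⟩² / σ_i²`. -/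
theorem invLoss_GENP_upper_bound
    (m p : ℕ) (hm : 0 < m) (hp : 0 < p)
    (v : OrthonormalBasis (Fin m) ℝ (EuclideanSpace ℝ (Fin m)))
    (u : Fin (min m p) → EuclideanSpace ℝ (Fin p)) (hu : Orthonormal ℝ u)
    (σ : Fin (min m p) → ℝ) (hσ : ∀ i, 0 ≤ σ i)
    (G : EuclideanSpace ℝ (Fin m) →ₗ[ℝ] EuclideanSpace ℝ (Fin p))
    (hG : ∀ x, G x = ∑ i : Fin (min m p),
      (σ i * ⟪v (Fin.castLE (min_le_left m p) i), x⟫_ℝ) • u i)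
    (k : ℕ) (hk : k ≤ min m p)
    (hσk : ∀ i : Fin (min m p), (i : ℕ) < k → 0 < σ i)
 :
    ∀ (x : EuclideanSpace ℝ (Fin m)) (ε : EuclideanSpace ℝ (Fin p)),
      (⨅ A : EuclideanSpace ℝ (Fin p) →ₗ[ℝ] EuclideanSpace ℝ (Fin m), ‖A (G x + ε) - x‖ ^ 2)
        ≤ ∑ i ∈ Finset.univ.filter (fun i : Fin m => k ≤ (i : ℕ)), ⟪v i, x⟫_ℝ ^ 2 + ∑ i ∈ Finset.univ.filter (fun i : Fin (min m p) => (i : ℕ) < k), ⟪u i, ε⟫_ℝ ^ 2 / (σ i) ^ 2 := by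
  intro x ε
  set E := Fin.castLE (min_le_left m p) with hE
  -- the rank-k attacker
  set A : EuclideanSpace ℝ (Fin p) →ₗ[ℝ] EuclideanSpace ℝ (Fin m) :=
    ∑ i ∈ Finset.univ.filter (fun i : Fin (min m p) => (i : ℕ) < k),
      LinearMap.smulRight ((innerSL ℝ (u i)).toLinearMap) ((σ i)⁻¹ • v (E i)) with hA
  have hinner_uG : ∀ i : Fin (min m p), ⟪u i, G x⟫_ℝ = σ i * ⟪v (E i), x⟫_ℝ := by
    intro i
    rw [hG, inner_sum]
    simp only [real_inner_smul_right]
    rw [Finset.sum_eq_single i]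
    · rw [(orthonormal_iff_ite.mp hu) i i]; simp
    · intro j _ hji
      rw [(orthonormal_iff_ite.mp hu) i j]; simp [Ne.symm hji]
    · simp
  -- the coefficient of the difference
  have hcoef : ∀ j : Fin m, ⟪v j, A (G x + ε) - x⟫_ℝ =
      if h : (j : ℕ) < k then ⟪u ⟨j, h.trans_le hk⟩, ε⟫_ℝ / σ ⟨j, h.trans_le hk⟩
      else -⟪v j, x⟫_ℝ := by
    intro j
    have hAy : ⟪v j, A (G x + ε)⟫_ℝ =
        ∑ i ∈ Finset.univ.filter (fun i : Fin (min m p) => (i : ℕ) < k),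
          (⟪u i, G x + ε⟫_ℝ) * ((σ i)⁻¹ * ⟪v j, v (E i)⟫_ℝ) := by
      rw [hA]
      simp only [LinearMap.sum_apply, LinearMap.smulRight_apply,
        ContinuousLinearMap.coe_coe, innerSL_apply_apply, inner_sum, real_inner_smul_right]
    by_cases h : (j : ℕ) < k
    · set i0 : Fin (min m p) := ⟨j, h.trans_le hk⟩ with hi0
      have hEi0 : E i0 = j := by ext; rfl
      rw [inner_sub_right, hAy, Finset.sum_eq_single i0]
      · rw [hEi0, (orthonormal_iff_ite.mp v.orthonormal) j j]
        simp only [if_pos rfl, ↓reduceIte, mul_one]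
        rw [inner_add_right, hinner_uG, hEi0]
        have hσ0 : σ i0 ≠ 0 := (hσk i0 h).ne'
        rw [dif_pos h]
        show _ = ⟪u i0, ε⟫_ℝ / σ i0
        field_simp
        ring
      · intro i _ hii0
        have : (j : Fin m) ≠ E i := by
          intro hEq
          apply hii0
          have := congrArg Fin.val hEq
          simp only [hE, Fin.coe_castLE] at this
          exact Fin.ext (by simp [hi0, ← this])
        rw [(orthonormal_iff_ite.mp v.orthonormal) j (E i), if_neg this]
        ring
      · intro hn; exact absurd (Finset.mem_filter.mpr ⟨Finset.mem_univ i0, h⟩) hn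
    · rw [inner_sub_right, hAy, Finset.sum_eq_zero, dif_neg h, zero_sub]
      intro i hi
      have hi' : (i : ℕ) < k := by simpa using hi
      have : (j : Fin m) ≠ E i := by
        intro hEq
        have := congrArg Fin.val hEq
        simp only [hE, Fin.coe_castLE] at this
        omega
      rw [(orthonormal_iff_ite.mp v.orthonormal) j (E i), if_neg this]
      ring
  have hnorm : ∀ y : EuclideanSpace ℝ (Fin m), ‖y‖^2 = ∑ j, ⟪v j, y⟫_ℝ^2 := by
    intro y
    rw [← v.repr.norm_map y, EuclideanSpace.norm_eq, Real.sq_sqrt (by positivity)]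
    simp [v.repr_apply_apply, Real.norm_eq_abs, sq_abs]
  refine ciInf_le_of_le ⟨0, ?_⟩ A ?_
  · rintro _ ⟨B, rfl⟩; positivity
  · rw [hnorm]
    rw [← Finset.sum_filter_add_sum_filter_not Finset.univ (fun j : Fin m => (j : ℕ) < k)]
    have h1 : ∑ j ∈ Finset.univ.filter (fun j : Fin m => (j : ℕ) < k),
        ⟪v j, A (G x + ε) - x⟫_ℝ^2
        = ∑ i ∈ Finset.univ.filter (fun i : Fin (min m p) => (i : ℕ) < k),
          ⟪u i, ε⟫_ℝ ^ 2 / (σ i) ^ 2 := by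
      refine Finset.sum_bij' (fun j hj => (⟨(j : ℕ), by
          simp only [Finset.mem_filter, Finset.mem_univ, true_and] at hj
          exact hj.trans_le hk⟩ : Fin (min m p))) (fun i _ => E i) ?_ ?_ ?_ ?_ ?_
      · intro j hj
        simp only [Finset.mem_filter, Finset.mem_univ, true_and] at hj ⊢
        exact hj
      · intro i hi
        simp only [Finset.mem_filter, Finset.mem_univ, true_and] at hi ⊢
        simpa [hE] using hi
      · intro j hj; ext; simp [hE]
      · intro i hi; ext; simp [hE]
      · intro j hj
        simp only [Finset.mem_filter, Finset.mem_univ, true_and] at hj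
        rw [hcoef j, dif_pos hj, div_pow]
    have h2 : ∑ j ∈ Finset.univ.filter (fun j : Fin m => ¬ (j : ℕ) < k),
        ⟪v j, A (G x + ε) - x⟫_ℝ^2
        = ∑ j ∈ Finset.univ.filter (fun j : Fin m => k ≤ (j : ℕ)), ⟪v j, x⟫_ℝ ^ 2 := by
      have : (Finset.univ.filter (fun j : Fin m => ¬ (j : ℕ) < k))
          = Finset.univ.filter (fun j : Fin m => k ≤ (j : ℕ)) := by
        apply Finset.filter_congr; intro j _; simp [not_lt]
      rw [this]
      refine Finset.sum_congr rfl ?_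
      intro j hj
      simp only [Finset.mem_filter, Finset.mem_univ, true_and] at hj
      rw [hcoef j, dif_neg (not_lt.mpr hj), neg_sq]
    rw [h1, h2, add_comm]
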